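/- Convexity of D_{ℚ,diff}: let Γ and Δ be finite sets of D_{ℚ,diff} constraints with Δ nonempty. If every assignment v : V → ℚ satisfying all constraints of Γ satisfies at least one constraint of Δ, then there exists a single constraint δ ∈ Δ that is satisfied by every assignment satisfying all constraints of Γ. -/

import Mathlib

/-- A `D_{ℚ,diff}` constraint over a set `V` of variables: `x = q`, `x > q`,
`x + q = y`, or the nullary constraint `⊥`. -/
inductive DiffConstraint (V : Type) : Type where
  | eq : V → ℚ → DiffConstraint V
  | gt : V → ℚ → DiffConstraint V
  | diff : V → ℚ → V → DiffConstraint V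
  | bot : DiffConstraint V

namespace DiffConstraint

/-- Satisfaction of a constraint by an assignment `v : V → ℚ`. -/
def Sat {V : Type} (v : V → ℚ) : DiffConstraint V → Prop
  | eq x q => v x = q
  | gt x q => v x > q
  | diff x q y => v x + q = v y
  | bot => False

/-- The variables occurring in a constraint. -/
def vars {V : Type} : DiffConstraint V → Set V
  | eq x _ => {x}
  | gt x _ => {x}
  | diff x _ y => {x, y}
  | bot => ∅

end DiffConstraint

/-- A variable occurs in the set `D` of constraints. -/
def OccursIn {V : Type} (D : Set (DiffConstraint V)) (x : V) : Prop :=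
  ∃ c ∈ D, x ∈ c.vars

/-- `saturate D` as an inductive predicate: the least superset of `D` closed under
the saturation rules R≠, R+, R0, R≠+, R−, R↔, R<, R=, R>. -/
inductive Saturate {V : Type} (D : Set (DiffConstraint V)) : DiffConstraint V → Prop
  | base {c : DiffConstraint V} : c ∈ D → Saturate D c
  | rneq {x : V} {q p : ℚ} : Saturate D (.eq x q) → Saturate D (.eq x p) → q ≠ p →
      Saturate D .bot
  | rplus {x y z : V} {q p : ℚ} : Saturate D (.diff x q y) → Saturate D (.diff y p z) →
      Saturate D (.diff x (q + p) z)
  | rzero {x : V} : OccursIn D x → Saturate D (.diff x 0 x)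
  | rneqplus {x y : V} {q p : ℚ} : Saturate D (.diff x q y) → Saturate D (.diff x p y) →
      q ≠ p → Saturate D .bot
  | rminus {x y : V} {q p : ℚ} : Saturate D (.eq x q) → Saturate D (.eq y p) →
      Saturate D (.diff x (p - q) y)
  | rsym {x y : V} {q : ℚ} : Saturate D (.diff x q y) → Saturate D (.diff y (-q) x)
  | rlt {x : V} {q p : ℚ} : Saturate D (.eq x q) → Saturate D (.gt x p) → q < p →
      Saturate D .bot
  | req {x y : V} {q p : ℚ} : Saturate D (.eq x q) → Saturate D (.diff x p y) →
      Saturate D (.eq y (q + p))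
  | rgt {x y : V} {q p : ℚ} : Saturate D (.gt x q) → Saturate D (.diff x p y) →
      Saturate D (.gt y (q + p))

open DiffConstraint

section Helpers
variable {V : Type}

/-- Solution sets of constraints are closed under convex combinations. -/
lemma sat_combo {v w : V → ℚ} {t : ℚ} (ht0 : 0 ≤ t) (ht1 : t ≤ 1)
    {c : DiffConstraint V} (hv : Sat v c) (hw : Sat w c) :
    Sat (fun x => (1 - t) * v x + t * w x) c := by
  cases c with
  | eq x q =>
      simp only [Sat] at *
      linear_combination (1 - t) * hv + t * hw
  | gt x q =>
      simp only [Sat, gt_iff_lt] at *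
      rcases eq_or_lt_of_le ht0 with h0 | h0
      · simpa [← h0] using hv
      · nlinarith [mul_nonneg (by linarith : (0:ℚ) ≤ 1 - t) (by linarith : (0:ℚ) ≤ v x - q),
          mul_pos h0 (by linarith : (0:ℚ) < w x - q)]
  | diff x q y =>
      simp only [Sat] at *
      linear_combination (1 - t) * hv + t * hw
  | bot => exact hv

/-- Solution sets of constraints are closed under pointwise min. -/
lemma sat_min {v w : V → ℚ} {c : DiffConstraint V} (hv : Sat v c) (hw : Sat w c) :
    Sat (fun x => min (v x) (w x)) c := by
  cases c with
  | eq x q => simp only [Sat] at *; rw [hv, hw, min_self]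
  | gt x q => simp only [Sat, gt_iff_lt] at *; exact lt_min hv hw
  | diff x q y =>
      simp only [Sat] at *
      rw [← hv, ← hw, ← min_add_add_right]
  | bot => exact hv

/-- Small affine extension beyond `v` away from `w` stays in the solution set. -/
lemma sat_ext {v w : V → ℚ} {Γ : Set (DiffConstraint V)} (hΓ : Γ.Finite) :
    (∀ c ∈ Γ, Sat v c) → (∀ c ∈ Γ, Sat w c) →
    ∃ s0 : ℚ, 0 < s0 ∧ ∀ s : ℚ, 0 < s → s ≤ s0 →
      ∀ c ∈ Γ, Sat (fun x => v x + s * (v x - w x)) c := by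
  induction Γ, hΓ using Set.Finite.induction_on with
  | empty => exact fun _ _ => ⟨1, one_pos, by simp⟩
  | @insert a Γ' ha hΓ' ih =>
    intro hv hw
    obtain ⟨s0, hs0, hs0'⟩ := ih (fun c hc => hv c (Set.mem_insert_of_mem _ hc))
      (fun c hc => hw c (Set.mem_insert_of_mem _ hc))
    have hva := hv a (Set.mem_insert _ _)
    have hwa := hw a (Set.mem_insert _ _)
    -- find a bound for the single constraint `a`
    have : ∃ s1 : ℚ, 0 < s1 ∧ ∀ s : ℚ, 0 < s → s ≤ s1 →
        Sat (fun x => v x + s * (v x - w x)) a := by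
      cases a with
      | eq x q =>
          refine ⟨1, one_pos, fun s _ _ => ?_⟩
          simp only [Sat] at *
          linear_combination (1 + s) * hva - s * hwa
      | gt x q =>
          simp only [Sat, gt_iff_lt] at hva hwa
          set M : ℚ := max (w x - v x) 0 with hM
          have hM0 : 0 ≤ M := le_max_right _ _
          have hM1 : w x - v x ≤ M := le_max_left _ _
          refine ⟨(v x - q) / (2 * (1 + M)), div_pos (by linarith) (by linarith), ?_⟩
          intro s hs hs'
          simp only [Sat, gt_iff_lt]
          have hden : (0:ℚ) < 2 * (1 + M) := by linarith
          have h1 : s * (2 * (1 + M)) ≤ v x - q := (le_div_iff₀ hden).mp hs'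
          have h2 : s * (w x - v x) ≤ s * M := mul_le_mul_of_nonneg_left hM1 hs.le
          nlinarith
      | diff x q y =>
          refine ⟨1, one_pos, fun s _ _ => ?_⟩
          simp only [Sat] at *
          linear_combination (1 + s) * hva - s * hwa
      | bot => exact absurd hva id
    obtain ⟨s1, hs1, hs1'⟩ := this
    refine ⟨min s0 s1, lt_min hs0 hs1, fun s hs hs' c hc => ?_⟩
    rcases Set.mem_insert_iff.mp hc with rfl | hc
    · exact hs1' s hs (hs'.trans (min_le_right _ _))
    · exact hs0' s hs (hs'.trans (min_le_left _ _)) c hc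

end Helpers


section Core
variable {V : Type}

/-- `c` is an equality-type constraint (`eq` or `diff`). -/
def EqDiff : DiffConstraint V → Prop
  | .eq _ _ => True
  | .diff _ _ _ => True
  | _ => False

/-- Defect measure of an equality-type constraint. -/
def meas : DiffConstraint V → (V → ℚ) → ℚ
  | .eq x q, v => v x - q
  | .diff x q y, v => v x + q - v y
  | _, _ => 0

lemma meas_ne_iff {c : DiffConstraint V} (h : EqDiff c) (v : V → ℚ) :
    ¬ Sat v c ↔ meas c v ≠ 0 := by
  cases c with
  | eq x q => simp [Sat, meas, sub_ne_zero]
  | diff x q y => simp [Sat, meas, sub_ne_zero]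
  | gt x q => exact absurd h id
  | bot => exact absurd h id

lemma meas_combo (c : DiffConstraint V) (v w : V → ℚ) (t : ℚ) :
    meas c (fun x => (1 - t) * v x + t * w x) = (1 - t) * meas c v + t * meas c w := by
  cases c <;> simp [meas] <;> ring

lemma roots_finite {a b : ℚ} (h : a ≠ 0 ∨ b ≠ 0) :
    {t : ℚ | (1 - t) * a + t * b = 0}.Finite := by
  by_cases hab : a = b
  · subst hab
    have ha : a ≠ 0 := h.elim id id
    convert Set.finite_empty
    ext t
    simp only [Set.mem_setOf_eq, Set.mem_empty_iff_false, iff_false]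
    intro ht
    exact ha (by linarith [ht, (by ring : (1 - t) * a + t * a = a)])
  · apply Set.Finite.subset (Set.finite_singleton (a / (a - b)))
    intro t ht
    simp only [Set.mem_setOf_eq] at ht
    simp only [Set.mem_singleton_iff]
    rw [eq_div_iff (sub_ne_zero.mpr hab)]
    linarith [ht]

lemma small_step {a b q t : ℚ} (hab : a < q) (ht : 0 < t)
    (ht' : t ≤ (q - a) / (2 * (1 + max (b - a) 0))) :
    (1 - t) * a + t * b < q := by
  set M : ℚ := max (b - a) 0 with hM
  have hM0 : 0 ≤ M := le_max_right _ _
  have hM1 : b - a ≤ M := le_max_left _ _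
  have hden : (0:ℚ) < 2 * (1 + M) := by linarith
  have h1 : t * (2 * (1 + M)) ≤ q - a := (le_div_iff₀ hden).mp ht'
  have h2 : t * (b - a) ≤ t * M := mul_le_mul_of_nonneg_left hM1 ht.le
  nlinarith

end Core


section Main
variable {V : Type}

/-- Combine strict-inequality witnesses by pointwise min. -/
lemma min_wit {Γ : Set (DiffConstraint V)} {A : Set (V × ℚ)} (hA : A.Finite)
    {v0 : V → ℚ} (hv0 : ∀ c ∈ Γ, Sat v0 c) :
    (∀ p ∈ A, ∃ w, (∀ c ∈ Γ, Sat w c) ∧ w p.1 < p.2) →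
    ∃ m, (∀ c ∈ Γ, Sat m c) ∧ ∀ p ∈ A, m p.1 < p.2 := by
  induction A, hA using Set.Finite.induction_on with
  | empty => exact fun _ => ⟨v0, hv0, by simp⟩
  | @insert p A hp hAfin ih =>
    intro hw
    obtain ⟨m, hmΓ, hmA⟩ := ih (fun q hq => hw q (Set.mem_insert_of_mem _ hq))
    obtain ⟨w, hwΓ, hwp⟩ := hw p (Set.mem_insert _ _)
    refine ⟨fun x => min (m x) (w x), fun c hc => sat_min (hmΓ c hc) (hwΓ c hc), ?_⟩
    rintro q hq
    rcases Set.mem_insert_iff.1 hq with rfl | hq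
    · exact lt_of_le_of_lt (min_le_right _ _) hwp
    · exact lt_of_le_of_lt (min_le_left _ _) (hmA q hq)

/-- The core perturbation lemma: starting from a solution `c0` of `Γ` that strictly
satisfies the upper bounds in `A`, and given violating witnesses for each
equality-type constraint in the finite set `T`, produce a single solution of `Γ`
still strictly satisfying `A` and violating all of `T`. -/
lemma core_lemma {Γ : Set (DiffConstraint V)}
    {A : Set (V × ℚ)} (hA : A.Finite)
    {T : Set (DiffConstraint V)} (hT : T.Finite)
    {c0 : V → ℚ} (hc0 : ∀ c ∈ Γ, Sat c0 c) (hc0A : ∀ p ∈ A, c0 p.1 < p.2) :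
    (∀ ε ∈ T, EqDiff ε) →
    (∀ ε ∈ T, ∃ w, (∀ c ∈ Γ, Sat w c) ∧ ¬ Sat w ε) →
    ∃ c', (∀ c ∈ Γ, Sat c' c) ∧ (∀ p ∈ A, c' p.1 < p.2) ∧ ∀ ε ∈ T, ¬ Sat c' ε := by
  induction T, hT using Set.Finite.induction_on with
  | empty => exact fun _ _ => ⟨c0, hc0, hc0A, by simp⟩
  | @insert δ T hδ hTfin ih =>
    intro hform hwit
    obtain ⟨c', hc'Γ, hc'A, hc'T⟩ := ih (fun ε hε => hform ε (Set.mem_insert_of_mem _ hε))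
      (fun ε hε => hwit ε (Set.mem_insert_of_mem _ hε))
    obtain ⟨w, hwΓ, hwδ⟩ := hwit δ (Set.mem_insert _ _)
    -- the bad parameters where an equality-type constraint of `insert δ T` is repaired
    set bad : Set ℚ :=
      ⋃ ε ∈ insert δ T, {t : ℚ | (1 - t) * meas ε c' + t * meas ε w = 0} with hbad
    have hbadfin : bad.Finite := by
      apply Set.Finite.biUnion (hTfin.insert δ)
      intro ε hε
      rcases Set.mem_insert_iff.1 hε with rfl | hε
      · exact roots_finite (Or.inr ((meas_ne_iff (hform ε (Set.mem_insert _ _)) w).mp hwδ))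
      · exact roots_finite (Or.inl
          ((meas_ne_iff (hform ε (Set.mem_insert_of_mem _ hε)) c').mp (hc'T ε hε)))
    -- the threshold keeping the strict bounds in `A`
    set f : V × ℚ → ℚ := fun p => (p.2 - c' p.1) / (2 * (1 + max (w p.1 - c' p.1) 0)) with hf
    set Q : Finset ℚ := insert (1:ℚ) (hA.toFinset.image f) with hQ
    have hQne : Q.Nonempty := Finset.insert_nonempty _ _
    set t0 : ℚ := Q.min' hQne with ht0
    have ht0pos : 0 < t0 := by
      rw [ht0, Finset.lt_min'_iff]
      intro b hb
      rw [hQ, Finset.mem_insert] at hb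
      rcases hb with rfl | hb
      · exact one_pos
      · obtain ⟨p, hp, rfl⟩ := Finset.mem_image.mp hb
        rw [Set.Finite.mem_toFinset] at hp
        have := hc'A p hp
        have hden : (0:ℚ) < 2 * (1 + max (w p.1 - c' p.1) 0) := by
          have := le_max_right (w p.1 - c' p.1) (0:ℚ)
          linarith
        exact div_pos (by linarith) hden
    have ht01 : t0 ≤ 1 := Finset.min'_le _ _ (Finset.mem_insert_self _ _)
    -- choose a good parameter
    obtain ⟨t, ⟨⟨htpos, htlt⟩, htbad⟩⟩ :
        ∃ t, t ∈ Set.Ioo (0:ℚ) t0 \ bad :=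
      ((Set.Ioo_infinite ht0pos).diff hbadfin).nonempty
    refine ⟨fun x => (1 - t) * c' x + t * w x, ?_, ?_, ?_⟩
    · exact fun c hc => sat_combo htpos.le (by linarith) (hc'Γ c hc) (hwΓ c hc)
    · intro p hp
      have hfp : t0 ≤ f p := by
        apply Finset.min'_le
        rw [hQ, Finset.mem_insert]
        exact Or.inr (Finset.mem_image.mpr ⟨p, (Set.Finite.mem_toFinset _).mpr hp, rfl⟩)
      exact small_step (hc'A p hp) htpos (le_of_lt (lt_of_lt_of_le htlt hfp))
    · intro ε hε
      have hmeas : meas ε (fun x => (1 - t) * c' x + t * w x) ≠ 0 := by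
        rw [meas_combo]
        intro h0
        exact htbad (Set.mem_biUnion hε h0)
      exact (meas_ne_iff (hform ε hε) _).mpr hmeas

end Main

/-- **Convexity of `D_{ℚ,diff}`.**
If `Γ` and `Δ` are finite sets of `D_{ℚ,diff}` constraints with `Δ` nonempty, and every
assignment satisfying all of `Γ` satisfies at least one constraint of `Δ`, then some single
constraint `δ ∈ Δ` is satisfied by every assignment satisfying all of `Γ`. -/
theorem diff_convex {V : Type} [Countable V] [Infinite V]
    (Γ Δ : Set (DiffConstraint V)) (hΓ : Γ.Finite) (hΔ : Δ.Finite) (hne : Δ.Nonempty)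
    (h : ∀ v : V → ℚ, (∀ c ∈ Γ, DiffConstraint.Sat v c) →
        ∃ δ ∈ Δ, DiffConstraint.Sat v δ) :
    ∃ δ ∈ Δ, ∀ v : V → ℚ, (∀ c ∈ Γ, DiffConstraint.Sat v c) → DiffConstraint.Sat v δ := by
  classical
  by_contra hcon
  push_neg at hcon
  obtain ⟨δ0, hδ0⟩ := hne
  obtain ⟨v0, hv0, -⟩ := hcon δ0 hδ0
  set A : Set (V × ℚ) :=
    {p | DiffConstraint.gt p.1 p.2 ∈ Δ ∧
      ∃ u, (∀ c ∈ Γ, DiffConstraint.Sat u c) ∧ u p.1 > p.2} with hAdef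
  have hAfin : A.Finite := by
    have hsub : A ⊆ (fun p : V × ℚ => DiffConstraint.gt p.1 p.2) ⁻¹' Δ := fun p hp => hp.1
    have hinj : Function.Injective (fun p : V × ℚ => DiffConstraint.gt p.1 p.2) := by
      intro p q hpq
      simp only [DiffConstraint.gt.injEq] at hpq
      exact Prod.ext hpq.1 hpq.2
    exact (hΔ.preimage hinj.injOn).subset hsub
  have hAwit : ∀ p ∈ A, ∃ w, (∀ c ∈ Γ, DiffConstraint.Sat w c) ∧ w p.1 < p.2 := by
    rintro ⟨x, q⟩ ⟨hmem, u, huΓ, huq⟩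
    obtain ⟨v, hvΓ, hvδ⟩ := hcon _ hmem
    simp only [DiffConstraint.Sat, gt_iff_lt, not_lt] at hvδ
    obtain ⟨s0, hs0, hs⟩ := sat_ext hΓ hvΓ huΓ
    refine ⟨fun y => v y + s0 * (v y - u y), hs s0 hs0 le_rfl, ?_⟩
    simp only [gt_iff_lt] at huq
    have h1 : v x - u x < 0 := by linarith
    have h2 := mul_neg_of_pos_of_neg hs0 h1
    dsimp only
    linarith
  obtain ⟨m, hmΓ, hmA⟩ := min_wit hAfin hv0 hAwit
  set T : Set (DiffConstraint V) := {ε ∈ Δ | EqDiff ε} with hTdef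
  have hTfin : T.Finite := hΔ.subset (Set.sep_subset _ _)
  obtain ⟨c', hc'Γ, hc'A, hc'T⟩ := core_lemma hAfin hTfin hmΓ hmA
    (fun ε hε => hε.2) (fun ε hε => hcon ε hε.1)
  obtain ⟨δ, hδΔ, hδsat⟩ := h c' hc'Γ
  cases δ with
  | eq x q => exact hc'T _ ⟨hδΔ, trivial⟩ hδsat
  | diff x q y => exact hc'T _ ⟨hδΔ, trivial⟩ hδsat
  | bot => exact hδsat
  | gt x q =>
      have hpA : ((x, q) : V × ℚ) ∈ A := ⟨hδΔ, c', hc'Γ, hδsat⟩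
      have hlt := hc'A _ hpA
      simp only [DiffConstraint.Sat, gt_iff_lt] at hδsat
      dsimp only at hlt
      linarith
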